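/- Let f_α be the density of the one-sided α-stable distribution with Laplace transform e^{-s^α}, 0 < α < 1, and F_α its distribution function. Define F_α(x | t) = F_α(x t^{-1/α}). Then for λ > 0, the function x ↦ 1 - λ ∫₀^∞ (1 - F_α(x t^{-1/α})) e^{-λ t} dt is a distribution function whose Laplace transform over x is s ↦ 1/s - s^{α-1}/(λ + s^α)·(1/1) ; equivalently, λ ∫₀^∞ (1 - F_α(x t^{-1/α})) e^{-λ t} dt = E_α(-λ x^α) for all x > 0 (Feller's result). -/

import Mathlib

open MeasureTheory Set Real Filter intervalIntegral

lemma gamma_ratio {α y : ℝ} (hα : 0 < α) (hy : 0 < y) :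
    y ^ α * Real.Gamma (y + 1) ≤ Real.Gamma (y + 1 + α) := by
  have hΓy : 0 < Real.Gamma y := Real.Gamma_pos_of_pos hy
  have hΓy1 : 0 < Real.Gamma (y + 1) := Real.Gamma_pos_of_pos (by linarith)
  have hΓy2 : 0 < Real.Gamma (y + 1 + α) := Real.Gamma_pos_of_pos (by linarith)
  have hslope := Real.convexOn_log_Gamma.slope_mono_adjacent
    (show y ∈ Ioi (0:ℝ) from hy) (show y + 1 + α ∈ Ioi (0:ℝ) by simp; linarith)
    (show y < y + 1 by linarith) (show y + 1 < y + 1 + α by linarith)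
  have h1 : Real.Gamma (y + 1) = y * Real.Gamma y := Real.Gamma_add_one hy.ne'
  have hlog : Real.log (Real.Gamma (y+1)) - Real.log (Real.Gamma y) = Real.log y := by
    rw [h1, Real.log_mul hy.ne' hΓy.ne']; ring
  simp only [Function.comp] at hslope
  have h2 : (y + 1 - y) = 1 := by ring
  have h3 : (y + 1 + α - (y + 1)) = α := by ring
  rw [h2, h3, div_one, hlog] at hslope
  -- hslope : log y ≤ (log Γ(y+1+α) - log Γ(y+1)) / α
  have h4 : α * Real.log y ≤ Real.log (Real.Gamma (y+1+α)) - Real.log (Real.Gamma (y+1)) := by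
    rw [mul_comm]
    exact (le_div_iff₀ hα).mp hslope
  have h5 : Real.log (y ^ α * Real.Gamma (y+1)) ≤ Real.log (Real.Gamma (y+1+α)) := by
    rw [Real.log_mul (by positivity) hΓy1.ne', Real.log_rpow hy]
    linarith
  have := Real.exp_le_exp.mpr h5
  rwa [Real.exp_log (by positivity), Real.exp_log hΓy2] at this

lemma ml_summable {α : ℝ} (hα : 0 < α) (c : ℝ) :
    Summable (fun n : ℕ => c ^ n / Real.Gamma (α * n + 1)) := by
  have htend : Tendsto (fun n : ℕ => (α * n) ^ α) atTop atTop :=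
    (tendsto_rpow_atTop hα).comp
      ((tendsto_natCast_atTop_atTop (R := ℝ)).const_mul_atTop hα)
  refine summable_of_ratio_norm_eventually_le (r := 1/2) (by norm_num) ?_
  filter_upwards [htend.eventually_ge_atTop (2 * |c|), eventually_ge_atTop 1] with n hn hn1
  have hαn : 0 < α * n := by positivity
  have hΓn : 0 < Real.Gamma (α * n + 1) := Real.Gamma_pos_of_pos (by linarith)
  have hΓn1 : 0 < Real.Gamma (α * (n+1) + 1) := Real.Gamma_pos_of_pos (by positivity)
  have hratio : (α * n) ^ α * Real.Gamma (α * n + 1) ≤ Real.Gamma (α * (n+1) + 1) := by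
    have := gamma_ratio hα hαn
    have heq : α * n + 1 + α = α * (n + 1) + 1 := by push_cast; ring
    rwa [heq] at this
  rw [Real.norm_eq_abs, Real.norm_eq_abs, abs_div, abs_div]
  push_cast
  rw [abs_of_pos hΓn, abs_of_pos hΓn1,
    abs_pow, abs_pow, pow_succ]
  have e2 : 2 * |c| * Real.Gamma (α * n + 1) ≤ Real.Gamma (α * (n+1) + 1) :=
    (mul_le_mul_of_nonneg_right hn hΓn.le).trans hratio
  have e3 : |c|^n * (2 * |c| * Real.Gamma (α * n + 1)) ≤ |c|^n * Real.Gamma (α * (n+1) + 1) :=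
    mul_le_mul_of_nonneg_left e2 (pow_nonneg (abs_nonneg c) n)
  have hRHS : 1/2 * (|c|^n / Real.Gamma (α*n+1)) = |c|^n / (2 * Real.Gamma (α*n+1)) := by ring
  rw [hRHS, div_le_div_iff₀ hΓn1 (by positivity)]
  calc |c|^n * |c| * (2 * Real.Gamma (α*n+1)) = |c|^n * (2 * |c| * Real.Gamma (α*n+1)) := by ring
    _ ≤ |c|^n * Real.Gamma (α * (n+1) + 1) := e3

lemma exp_taylor_bound : ∀ (n : ℕ) {y : ℝ}, 0 ≤ y →
    |Real.exp (-y) - ∑ k ∈ Finset.range n, (-y)^k / (Nat.factorial k)| ≤ y^n / (Nat.factorial n) := by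
  intro n
  induction n with
  | zero =>
    intro y hy
    simp only [Finset.range_zero, Finset.sum_empty, sub_zero, pow_zero, Nat.factorial_zero,
      Nat.cast_one, div_one, abs_of_pos (Real.exp_pos (-y))]
    exact Real.exp_le_one_iff.mpr (neg_nonpos.mpr hy)
  | succ n ih =>
    intro y hy
    set g : ℕ → ℝ → ℝ := fun m t => Real.exp (-t) - ∑ k ∈ Finset.range m, (-t)^k / (Nat.factorial k) with hg
    have hderiv : ∀ t : ℝ, HasDerivAt (fun t => -(g (n+1) t)) (g n t) t := by
      intro t
      have h1 : HasDerivAt (fun t : ℝ => Real.exp (-t)) (-Real.exp (-t)) t := by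
        simpa [Function.comp_def] using (Real.hasDerivAt_exp (-t)).comp t (hasDerivAt_neg t)
      have h2 : ∀ k : ℕ, HasDerivAt (fun t : ℝ => (-t)^k / (Nat.factorial k))
          (if k = 0 then 0 else -((-t)^(k-1) / (Nat.factorial (k-1)))) t := by
        intro k
        cases k with
        | zero => simpa using (hasDerivAt_const t ((1:ℝ)/1))
        | succ k =>
          have h3 : HasDerivAt (fun t : ℝ => (-t)^(k+1)) ((k+1) * (-t)^k * (-1)) t := by
            have := (hasDerivAt_pow (k+1) (-t)).comp t (hasDerivAt_neg t)
            simpa [Function.comp_def] using this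
          have := h3.div_const (Nat.factorial (k+1))
          simp only [if_neg (Nat.succ_ne_zero k)]
          refine this.congr_deriv ?_
          rw [Nat.succ_sub_one, Nat.factorial_succ]
          push_cast
          field_simp
      have hsum : HasDerivAt (fun t : ℝ => ∑ k ∈ Finset.range (n+1), (-t)^k / (Nat.factorial k))
          (∑ k ∈ Finset.range (n+1), if k = 0 then 0 else -((-t)^(k-1) / (Nat.factorial (k-1)))) t :=
        HasDerivAt.fun_sum (fun k _ => h2 k)
      have heq : (∑ k ∈ Finset.range (n+1), if k = 0 then 0 else -((-t)^(k-1) / (Nat.factorial (k-1))))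
          = -∑ k ∈ Finset.range n, (-t)^k / (Nat.factorial k) := by
        rw [Finset.sum_range_succ']
        simp [Finset.sum_neg_distrib]
      rw [heq] at hsum
      have := hsum.sub h1
      convert this using 1
      · rfl
      · rfl
      · ext s; simp [hg]
      · simp [hg]; ring
    have hcont : ∀ m, Continuous (g m) := by
      intro m
      apply Continuous.sub
      · exact Real.continuous_exp.comp continuous_neg
      · exact continuous_finset_sum _ (fun k _ => by fun_prop)
    have hftc : ∫ t in (0:ℝ)..y, g n t = -(g (n+1) y) - -(g (n+1) 0) :=
      intervalIntegral.integral_eq_sub_of_hasDerivAt (fun t _ => hderiv t)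
        ((hcont n).intervalIntegrable 0 y)
    have hzero : g (n+1) 0 = 0 := by
      simp only [hg, neg_zero, Real.exp_zero]
      rw [Finset.sum_eq_single 0]
      · simp
      · intro k _ hk
        simp [zero_pow hk]
      · simp
    have hval : g (n+1) y = -∫ t in (0:ℝ)..y, g n t := by
      rw [hftc, hzero]; ring
    have hbnd : |∫ t in (0:ℝ)..y, g n t| ≤ |∫ t in (0:ℝ)..y, t^n / (Nat.factorial n)| := by
      rw [← Real.norm_eq_abs (∫ t in (0:ℝ)..y, g n t)]
      apply intervalIntegral.norm_integral_le_abs_of_norm_le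
      · rw [uIoc_of_le hy]
        filter_upwards [ae_restrict_mem measurableSet_Ioc] with t ht
        rw [Real.norm_eq_abs]
        exact ih ht.1.le
      · apply Continuous.intervalIntegrable
        fun_prop
    have hintpow : ∫ t in (0:ℝ)..y, t^n / (Nat.factorial n)
        = y^(n+1) / (Nat.factorial (n+1)) := by
      rw [intervalIntegral.integral_div, integral_pow]
      rw [Nat.factorial_succ]
      push_cast
      field_simp
      simp
    show |g (n+1) y| ≤ _
    rw [hval, abs_neg]
    calc |∫ t in (0:ℝ)..y, g n t| ≤ |∫ t in (0:ℝ)..y, t^n / (Nat.factorial n)| := hbnd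
      _ = y^(n+1) / (Nat.factorial (n+1)) := by
          rw [hintpow, abs_of_nonneg (by positivity)]

lemma integrable_aux {α : ℝ} (hα : 0 < α) (k : ℕ) (hk : 1 ≤ k) :
    IntegrableOn (fun s : ℝ => s ^ (α * k - 1) * Real.exp (-(s ^ α))) (Set.Ioi 0) := by
  have hk' : (0:ℝ) < (k:ℝ) := by exact_mod_cast hk
  have hF : IntegrableOn (fun y : ℝ => Real.exp (-y) * y ^ ((k:ℝ) - 1)) (Set.Ioi 0) :=
    Real.GammaIntegral_convergent hk'
  have h2 := (integrableOn_Ioi_comp_rpow_iff'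
    (fun y : ℝ => Real.exp (-y) * y ^ ((k:ℝ)-1)) (p := α) hα.ne').mpr hF
  refine h2.congr_fun ?_ measurableSet_Ioi
  intro s hs
  have hs' : (0:ℝ) < s := hs
  have h3 : (s ^ α) ^ ((k:ℝ) - 1) = s ^ (α * ((k:ℝ) - 1)) := (Real.rpow_mul hs'.le _ _).symm
  simp only [smul_eq_mul, h3]
  rw [show α * (k:ℝ) - 1 = (α - 1) + α * ((k:ℝ) - 1) by ring, Real.rpow_add hs']
  ring

lemma moment {α : ℝ} (hα : 0 < α) (hα1 : α < 1) {f : ℝ → ℝ}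
    (hf_nonneg : ∀ x > (0 : ℝ), 0 ≤ f x)
    (hf_int : IntegrableOn f (Set.Ioi 0))
    (hf_lt : ∀ s > (0 : ℝ),
      ∫ t in Set.Ioi (0 : ℝ), Real.exp (-(s * t)) * f t = Real.exp (-(s ^ α)))
    (k : ℕ) (hk : 1 ≤ k) :
    IntegrableOn (fun u => f u * u ^ (-(α * k))) (Set.Ioi 0) ∧
      ∫ u in Set.Ioi (0:ℝ), f u * u ^ (-(α * k)) =
        (Nat.factorial k) / Real.Gamma (α * k + 1) := by
  set ν : Measure ℝ := volume.restrict (Set.Ioi 0) with hν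
  set a : ℝ := α * k with ha
  have hk' : (0:ℝ) < (k:ℝ) := by exact_mod_cast hk
  have ha0 : 0 < a := by positivity
  have hΓa : 0 < Real.Gamma a := Real.Gamma_pos_of_pos ha0
  set W : ℝ × ℝ → ℝ := fun p => p.1 ^ (a - 1) * Real.exp (-(p.1 * p.2)) * f p.2 with hW
  have hf_meas : AEStronglyMeasurable f ν := hf_int.aestronglyMeasurable
  have hf_ae : ∀ᵐ u ∂ν, 0 ≤ f u := by
    rw [hν, ae_restrict_iff' measurableSet_Ioi]
    exact ae_of_all _ hf_nonneg
  -- measurability of W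
  have hWm : AEStronglyMeasurable W (ν.prod ν) := by
    have m1 : Measurable (fun p : ℝ × ℝ => p.1 ^ (a - 1)) := by fun_prop
    have m2 : Continuous (fun p : ℝ × ℝ => Real.exp (-(p.1 * p.2))) := by fun_prop
    exact ((m1.aestronglyMeasurable.mul m2.aestronglyMeasurable).mul hf_meas.comp_snd)
  -- slice integrability
  have hslice : ∀ s ∈ Set.Ioi (0:ℝ), Integrable (fun u => W (s, u)) ν := by
    intro s hs
    have hs' : (0:ℝ) < s := hs
    have hinner : Integrable (fun u => Real.exp (-(s * u)) * f u) ν := by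
      refine MeasureTheory.Integrable.mono hf_int ?_ ?_
      · exact ((Real.continuous_exp.comp (continuous_const.mul continuous_id).neg
          |>.aestronglyMeasurable).mul hf_meas)
      · rw [hν, ae_restrict_iff' measurableSet_Ioi]
        refine ae_of_all _ (fun u hu => ?_)
        rw [norm_mul, Real.norm_eq_abs (Real.exp _), abs_of_pos (Real.exp_pos _)]
        have : Real.exp (-(s * u)) ≤ 1 :=
          Real.exp_le_one_iff.mpr (by nlinarith [hu.out])
        nlinarith [abs_nonneg (f u), norm_nonneg (f u)]
    have := hinner.const_mul (s ^ (a - 1))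
    refine this.congr (ae_of_all _ (fun u => ?_))
    simp only [hW]; ring
  -- the norm-integral function
  have hnormval : ∀ s ∈ Set.Ioi (0:ℝ),
      (∫ u, ‖W (s, u)‖ ∂ν) = s ^ (a-1) * Real.exp (-(s ^ α)) := by
    intro s hs
    have hs' : (0:ℝ) < s := hs
    have h1 : (fun u => ‖W (s, u)‖) =ᵐ[ν] fun u => s ^ (a-1) * (Real.exp (-(s * u)) * f u) := by
      filter_upwards [hf_ae] with u hu
      simp only [hW, norm_mul, Real.norm_eq_abs]
      rw [abs_of_nonneg (Real.rpow_nonneg hs'.le _), abs_of_pos (Real.exp_pos _),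
        abs_of_nonneg hu]
      ring
    rw [integral_congr_ae h1, MeasureTheory.integral_const_mul, hf_lt s hs']
  have hnormint : Integrable (fun s => ∫ u, ‖W (s, u)‖ ∂ν) ν := by
    refine (integrable_aux hα k hk).congr ?_
    rw [hν, EventuallyEq, ae_restrict_iff' measurableSet_Ioi]
    exact ae_of_all _ (fun s hs => (hnormval s hs).symm)
  have hWint : Integrable W (ν.prod ν) := by
    rw [integrable_prod_iff hWm]
    constructor
    · rw [hν, ae_restrict_iff' measurableSet_Ioi]
      exact ae_of_all _ (fun s hs => by rw [← hν]; exact hslice s hs)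
    · exact hnormint
  -- Fubini
  have hswap : ∫ s, ∫ u, W (s, u) ∂ν ∂ν = ∫ u, ∫ s, W (s, u) ∂ν ∂ν :=
    integral_integral_swap hWint
  -- LHS value
  have hLHS : ∫ s, ∫ u, W (s, u) ∂ν ∂ν = (1/α) * Real.Gamma ((k:ℝ)) := by
    have h1 : ∀ s ∈ Set.Ioi (0:ℝ), (∫ u, W (s, u) ∂ν) = s ^ (a-1) * Real.exp (-(s ^ α)) := by
      intro s hs
      have hs' : (0:ℝ) < s := hs
      have : (fun u => W (s, u)) =ᵐ[ν] fun u => s ^ (a-1) * (Real.exp (-(s * u)) * f u) :=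
        ae_of_all _ (fun u => by simp only [hW]; ring)
      rw [integral_congr_ae this, MeasureTheory.integral_const_mul, hf_lt s hs']
    rw [hν, setIntegral_congr_fun measurableSet_Ioi h1]
    have := integral_rpow_mul_exp_neg_rpow hα (q := a - 1) (by linarith)
    rw [show a - 1 + 1 = a by ring] at this
    rw [this]
    congr 1
    rw [ha]
    field_simp
  -- RHS value
  have hRHS : ∫ u, ∫ s, W (s, u) ∂ν ∂ν =
      Real.Gamma a * ∫ u in Set.Ioi (0:ℝ), f u * u ^ (-a) := by
    have h1 : ∀ u ∈ Set.Ioi (0:ℝ),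
        (∫ s, W (s, u) ∂ν) = Real.Gamma a * (f u * u ^ (-a)) := by
      intro u hu
      have hu' : (0:ℝ) < u := hu
      have h2 : (fun s => W (s, u)) =ᵐ[ν] fun s => (s ^ (a-1) * Real.exp (-(u * s))) * f u :=
        ae_of_all _ (fun s => by simp only [hW]; rw [mul_comm s u])
      rw [integral_congr_ae h2, MeasureTheory.integral_mul_const, hν,
        integral_rpow_mul_exp_neg_mul_Ioi ha0 hu']
      rw [one_div, Real.inv_rpow hu'.le, Real.rpow_neg hu'.le]
      ring
    rw [hν, setIntegral_congr_fun measurableSet_Ioi h1, MeasureTheory.integral_const_mul]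
  -- conclude value
  have hΓk : Real.Gamma ((k:ℝ)) = (Nat.factorial (k-1)) := by
    obtain ⟨m, rfl⟩ := Nat.exists_eq_add_of_le hk
    rw [show ((1 + m : ℕ) : ℝ) = (m : ℝ) + 1 by push_cast; ring, Real.Gamma_nat_eq_factorial]
    simp
  have hΓa1 : Real.Gamma (a + 1) = a * Real.Gamma a := Real.Gamma_add_one ha0.ne'
  have hfac : (Nat.factorial k : ℝ) = k * (Nat.factorial (k-1)) := by
    obtain ⟨m, rfl⟩ := Nat.exists_eq_add_of_le hk
    rw [show (1 + m) - 1 = m by omega, show (1+m) = m+1 by omega, Nat.factorial_succ]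
    push_cast; ring
  have hne : Real.Gamma a ≠ 0 := hΓa.ne'
  have hkey : (Nat.factorial k : ℝ) / Real.Gamma (a + 1)
      = 1/α * Real.Gamma ((k:ℝ)) / Real.Gamma a := by
    have hΓa1pos : 0 < Real.Gamma (a+1) := Real.Gamma_pos_of_pos (by linarith)
    rw [div_eq_div_iff hΓa1pos.ne' hne, hΓa1, hfac, hΓk, ha]
    field_simp
  have hval : ∫ u in Set.Ioi (0:ℝ), f u * u ^ (-a) =
      (Nat.factorial k) / Real.Gamma (a + 1) := by
    have h0 : Real.Gamma a * ∫ u in Set.Ioi (0:ℝ), f u * u ^ (-a)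
        = (1/α) * Real.Gamma ((k:ℝ)) := by rw [← hRHS, ← hswap, hLHS]
    rw [hkey, eq_div_iff hne]
    linear_combination h0
  -- conclude integrability
  have hint : IntegrableOn (fun u => f u * u ^ (-a)) (Set.Ioi 0) := by
    have h1 := hWint.swap.integral_prod_left
    have h2 : (fun u => ∫ s, W (s, u) ∂ν) =ᵐ[ν] fun u => Real.Gamma a * (f u * u ^ (-a)) := by
      rw [hν, EventuallyEq, ae_restrict_iff' measurableSet_Ioi]
      refine ae_of_all _ (fun u hu => ?_)
      have hu' : (0:ℝ) < u := hu
      have h2 : (fun s => W (s, u)) =ᵐ[ν] fun s => (s ^ (a-1) * Real.exp (-(u * s))) * f u :=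
        ae_of_all _ (fun s => by simp only [hW]; rw [mul_comm s u])
      show (∫ s, W (s, u) ∂ν) = _
      rw [integral_congr_ae h2, MeasureTheory.integral_mul_const, hν,
        integral_rpow_mul_exp_neg_mul_Ioi ha0 hu']
      rw [one_div, Real.inv_rpow hu'.le, Real.rpow_neg hu'.le]
      ring
    have h3 : Integrable (fun u => Real.Gamma a * (f u * u ^ (-a))) ν := h1.congr h2
    have h4 := h3.const_mul (Real.Gamma a)⁻¹
    refine h4.congr (ae_of_all _ (fun u => ?_))
    field_simp
  exact ⟨hint, hval⟩

lemma key_integral {α : ℝ} (hα : 0 < α) (hα1 : α < 1) {f : ℝ → ℝ}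
    (hf_nonneg : ∀ x > (0 : ℝ), 0 ≤ f x)
    (hf_int : IntegrableOn f (Set.Ioi 0))
    (hf_prob : ∫ x in Set.Ioi (0 : ℝ), f x = 1)
    (hf_lt : ∀ s > (0 : ℝ),
      ∫ t in Set.Ioi (0 : ℝ), Real.exp (-(s * t)) * f t = Real.exp (-(s ^ α)))
    {c : ℝ} (hc : 0 < c) :
    ∫ u in Set.Ioi (0:ℝ), f u * Real.exp (-(c * u ^ (-α))) =
      ∑' k : ℕ, (-c)^k / Real.Gamma (α * k + 1) := by
  set ν : Measure ℝ := volume.restrict (Set.Ioi 0) with hν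
  have hf_meas : AEStronglyMeasurable f ν := hf_int.aestronglyMeasurable
  have hf_ae : ∀ᵐ u ∂ν, 0 ≤ f u := by
    rw [hν, ae_restrict_iff' measurableSet_Ioi]; exact ae_of_all _ hf_nonneg
  -- moments for all k
  have hmom : ∀ k : ℕ, IntegrableOn (fun u => f u * u ^ (-(α * k))) (Set.Ioi 0) ∧
      ∫ u in Set.Ioi (0:ℝ), f u * u ^ (-(α * k)) =
        (Nat.factorial k) / Real.Gamma (α * k + 1) := by
    intro k
    rcases Nat.eq_zero_or_pos k with rfl | hk
    · constructor
      · refine hf_int.congr_fun (fun u hu => ?_) measurableSet_Ioi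
        simp
      · have h0 : ∀ u ∈ Set.Ioi (0:ℝ), f u * u ^ (-(α * ((0:ℕ):ℝ))) = f u :=
          fun u hu => by push_cast; simp
        rw [setIntegral_congr_fun measurableSet_Ioi h0]
        simpa [Real.Gamma_one] using hf_prob
    · exact moment hα hα1 hf_nonneg hf_int hf_lt k hk
  -- integrability of the main integrand
  have hmain_int : Integrable (fun u => f u * Real.exp (-(c * u ^ (-α)))) ν := by
    refine MeasureTheory.Integrable.mono hf_int
      (hf_meas.mul (by fun_prop : Measurable fun u : ℝ => Real.exp (-(c * u ^ (-α)))).aestronglyMeasurable) ?_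
    rw [hν, ae_restrict_iff' measurableSet_Ioi]
    refine ae_of_all _ (fun u hu => ?_)
    have hu' : (0:ℝ) < u := hu
    rw [norm_mul, Real.norm_eq_abs (Real.exp _), abs_of_pos (Real.exp_pos _)]
    have h1 : Real.exp (-(c * u ^ (-α))) ≤ 1 := by
      rw [Real.exp_le_one_iff, neg_nonpos]
      positivity
    nlinarith [abs_nonneg (f u), norm_nonneg (f u), Real.exp_pos (-(c * u ^ (-α)))]
  -- pointwise rewriting of power terms
  have hpow : ∀ (k : ℕ) (u : ℝ), 0 < u → (-(c * u ^ (-α)))^k = (-c)^k * u ^ (-(α * k)) := by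
    intro k u hu
    rw [show -(c * u ^ (-α)) = (-c) * u ^ (-α) by ring, mul_pow, ← Real.rpow_natCast (u ^ (-α)) k,
      ← Real.rpow_mul hu.le, show -α * k = -(α * k) by ring]
  -- partial sums
  set S : ℕ → ℝ := fun n => ∑ k ∈ Finset.range n, (-c)^k / Real.Gamma (α * k + 1) with hS
  have hint_term : ∀ k : ℕ, Integrable (fun u => ((-c)^k / (Nat.factorial k)) * (f u * u ^ (-(α * k)))) ν :=
    fun k => ((hmom k).1).const_mul _
  have hsum_eq : ∀ (n : ℕ) (u : ℝ), u ∈ Set.Ioi (0:ℝ) →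
      f u * (∑ k ∈ Finset.range n, (-(c * u ^ (-α)))^k / (Nat.factorial k))
        = ∑ k ∈ Finset.range n, ((-c)^k / (Nat.factorial k)) * (f u * u ^ (-(α * k))) := by
    intro n u hu
    rw [Finset.mul_sum]
    refine Finset.sum_congr rfl (fun k _ => ?_)
    rw [hpow k u hu]
    ring
  have hSn : ∀ n : ℕ, ∫ u in Set.Ioi (0:ℝ),
      f u * (∑ k ∈ Finset.range n, (-(c * u ^ (-α)))^k / (Nat.factorial k)) = S n := by
    intro n
    rw [setIntegral_congr_fun measurableSet_Ioi (hsum_eq n), integral_finset_sum _ (fun k _ => hint_term k)]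
    refine Finset.sum_congr rfl (fun k _ => ?_)
    rw [MeasureTheory.integral_const_mul, (hmom k).2]
    have h5 : (Nat.factorial k : ℝ) ≠ 0 := by positivity
    field_simp
  have hint_psum : ∀ n : ℕ, Integrable (fun u =>
      f u * (∑ k ∈ Finset.range n, (-(c * u ^ (-α)))^k / (Nat.factorial k))) ν := by
    intro n
    refine (integrable_finset_sum (Finset.range n) (fun k (_ : k ∈ Finset.range n) => hint_term k)).congr ?_
    rw [hν, EventuallyEq, ae_restrict_iff' measurableSet_Ioi]
    exact ae_of_all _ (fun u hu => (hsum_eq n u hu).symm)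
  -- error bound
  have herr : ∀ n : ℕ, |(∫ u in Set.Ioi (0:ℝ), f u * Real.exp (-(c * u ^ (-α)))) - S n|
      ≤ c^n / Real.Gamma (α * n + 1) := by
    intro n
    rw [← hSn n, ← integral_sub hmain_int (hint_psum n)]
    have hb : ∀ u ∈ Set.Ioi (0:ℝ),
        |f u * Real.exp (-(c * u ^ (-α))) - f u * (∑ k ∈ Finset.range n, (-(c * u ^ (-α)))^k / (Nat.factorial k))|
          ≤ (c^n / (Nat.factorial n)) * (f u * u ^ (-(α * n))) := by
      intro u hu
      have hu' : (0:ℝ) < u := hu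
      have hy : 0 ≤ c * u ^ (-α) := by positivity
      have := exp_taylor_bound n hy
      rw [← mul_sub, abs_mul, abs_of_nonneg (hf_nonneg u hu')]
      have h2 : |Real.exp (-(c * u ^ (-α))) - ∑ k ∈ Finset.range n, (-(c * u ^ (-α)))^k / (Nat.factorial k)|
          ≤ (c * u ^ (-α))^n / (Nat.factorial n) := this
      have h3 : (c * u ^ (-α))^n = c^n * u ^ (-(α * n)) := by
        rw [mul_pow, ← Real.rpow_natCast (u ^ (-α)) n, ← Real.rpow_mul hu'.le,
          show -α * n = -(α * n) by ring]
      calc f u * |Real.exp (-(c * u ^ (-α))) - ∑ k ∈ Finset.range n, (-(c * u ^ (-α)))^k / (Nat.factorial k)|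
          ≤ f u * ((c * u ^ (-α))^n / (Nat.factorial n)) :=
            mul_le_mul_of_nonneg_left h2 (hf_nonneg u hu')
        _ = (c^n / (Nat.factorial n)) * (f u * u ^ (-(α * n))) := by rw [h3]; ring
    calc |∫ u in Set.Ioi (0:ℝ), (f u * Real.exp (-(c * u ^ (-α))) -
            f u * (∑ k ∈ Finset.range n, (-(c * u ^ (-α)))^k / (Nat.factorial k)))|
        ≤ ∫ u in Set.Ioi (0:ℝ), |f u * Real.exp (-(c * u ^ (-α))) -
            f u * (∑ k ∈ Finset.range n, (-(c * u ^ (-α)))^k / (Nat.factorial k))| :=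
          by rw [← Real.norm_eq_abs]
             refine (MeasureTheory.norm_integral_le_integral_norm _).trans_eq ?_
             simp [Real.norm_eq_abs]
      _ ≤ ∫ u in Set.Ioi (0:ℝ), (c^n / (Nat.factorial n)) * (f u * u ^ (-(α * n))) := by
          refine integral_mono_ae ((hmain_int.sub (hint_psum n)).abs)
            (((hmom n).1).const_mul _) ?_
          exact (ae_restrict_iff' measurableSet_Ioi).mpr (ae_of_all _ hb)
      _ = c^n / Real.Gamma (α * n + 1) := by
          rw [MeasureTheory.integral_const_mul, (hmom n).2]
          have h6 : (Nat.factorial n : ℝ) ≠ 0 := by positivity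
          field_simp
  -- conclusion
  have h1 : Tendsto S atTop (nhds (∑' k : ℕ, (-c)^k / Real.Gamma (α * k + 1))) :=
    (ml_summable hα (-c)).hasSum.tendsto_sum_nat
  have h2 : Tendsto (fun n : ℕ => c^n / Real.Gamma (α * n + 1)) atTop (nhds 0) :=
    (ml_summable hα c).tendsto_atTop_zero
  have h3 : Tendsto (fun n => S n - (∫ u in Set.Ioi (0:ℝ), f u * Real.exp (-(c * u ^ (-α)))))
      atTop (nhds 0) := by
    refine squeeze_zero_norm (fun n => ?_) h2
    rw [Real.norm_eq_abs, abs_sub_comm]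
    exact herr n
  have h4 : Tendsto S atTop (nhds (∫ u in Set.Ioi (0:ℝ), f u * Real.exp (-(c * u ^ (-α))))) := by
    have := h3.add_const (∫ u in Set.Ioi (0:ℝ), f u * Real.exp (-(c * u ^ (-α))))
    simpa using this
  exact tendsto_nhds_unique h4 h1

/-- The one-parameter Mittag-Leffler function `E_α(x) = ∑ x^k / Γ(αk+1)`. -/
noncomputable def mittagLeffler (α x : ℝ) : ℝ :=
  ∑' k : ℕ, x ^ k / Real.Gamma (α * k + 1)

theorem feller_representation (α lam : ℝ) (hα : 0 < α) (hα1 : α < 1) (hlam : 0 < lam)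
    (f F : ℝ → ℝ)
    (hf_nonneg : ∀ x > (0 : ℝ), 0 ≤ f x)
    (hf_prob : ∫ x in Set.Ioi (0 : ℝ), f x = 1)
    (hf_lt : ∀ s > (0 : ℝ),
      ∫ t in Set.Ioi (0 : ℝ), Real.exp (-(s * t)) * f t = Real.exp (-(s ^ α)))
    (hF : ∀ x : ℝ, F x = ∫ u in Set.Ioc (0 : ℝ) x, f u) :
    ∀ x > (0 : ℝ),
      lam * ∫ t in Set.Ioi (0 : ℝ), (1 - F (x * t ^ (-(1 / α)))) * Real.exp (-(lam * t)) =
        mittagLeffler α (-(lam * x ^ α)) := by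
  intro x hx
  have hf_int : IntegrableOn f (Set.Ioi 0) := by
    by_contra h
    rw [MeasureTheory.integral_undef h] at hf_prob
    norm_num at hf_prob
  set ν : Measure ℝ := volume.restrict (Set.Ioi 0) with hν
  have hf_meas : AEStronglyMeasurable f ν := hf_int.aestronglyMeasurable
  have hf_ae : ∀ᵐ u ∂ν, 0 ≤ f u := by
    rw [hν, ae_restrict_iff' measurableSet_Ioi]; exact ae_of_all _ hf_nonneg
  -- tail formula
  have htail : ∀ y : ℝ, 0 < y → 1 - F y = ∫ u in Set.Ioi y, f u := by
    intro y hy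
    have hsplit : ∫ u in Set.Ioi (0:ℝ), f u =
        (∫ u in Set.Ioc 0 y, f u) + ∫ u in Set.Ioi y, f u := by
      rw [← MeasureTheory.setIntegral_union (Set.Ioc_disjoint_Ioi le_rfl) measurableSet_Ioi
        (hf_int.mono_set Set.Ioc_subset_Ioi_self) (hf_int.mono_set (Set.Ioi_subset_Ioi hy.le)),
        Set.Ioc_union_Ioi_eq_Ioi hy.le]
    rw [hF y]
    have := hf_prob
    rw [hsplit] at this
    linarith
  -- condition equivalence
  have hcond : ∀ t u : ℝ, 0 < t → 0 < u → ((x/u) ^ α < t ↔ x * t ^ (-(1/α)) < u) := by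
    intro t u ht hu
    have hb : (0:ℝ) < t ^ (1/α) := Real.rpow_pos_of_pos ht _
    have ht1 : (t ^ (1/α)) ^ α = t := by
      rw [← Real.rpow_mul ht.le, one_div, inv_mul_cancel₀ hα.ne', Real.rpow_one]
    have h1 : (x/u) ^ α < t ↔ x/u < t ^ (1/α) := by
      conv_lhs => rw [← ht1]
      exact Real.rpow_lt_rpow_iff (by positivity) (by positivity) hα
    have h2 : x * t ^ (-(1/α)) < u ↔ x < u * t ^ (1/α) := by
      rw [Real.rpow_neg ht.le, ← div_eq_mul_inv, div_lt_iff₀ hb]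
    rw [h1, div_lt_iff₀' hu]
    exact h2.symm
  -- the product kernel
  set S : Set (ℝ × ℝ) := {p : ℝ × ℝ | (x / p.2) ^ α < p.1} with hSdef
  have hSm : MeasurableSet S := by
    apply measurableSet_lt
    · fun_prop
    · exact measurable_fst
  set V : ℝ → ℝ → ℝ := fun t u =>
    S.indicator (fun p : ℝ × ℝ => Real.exp (-(lam * p.1))) (t, u) * f u with hVdef
  have hVuncurry : Function.uncurry V =
      fun p : ℝ × ℝ => S.indicator (fun p : ℝ × ℝ => Real.exp (-(lam * p.1))) p * f p.2 := by
    funext p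
    simp [Function.uncurry, hVdef]
  have hVm : AEStronglyMeasurable (Function.uncurry V) (ν.prod ν) := by
    rw [hVuncurry]
    exact (((Real.continuous_exp.comp (continuous_const.mul continuous_fst).neg)
      |>.aestronglyMeasurable.indicator hSm).mul hf_meas.comp_snd)
  -- slice integrability
  have hslice : ∀ t : ℝ, Integrable (fun u => V t u) ν := by
    intro t
    refine MeasureTheory.Integrable.mono hf_int ?_ ?_
    · have hm : StronglyMeasurable (fun p : ℝ × ℝ => S.indicator
          (fun p : ℝ × ℝ => Real.exp (-(lam * p.1))) p) := by
        refine StronglyMeasurable.indicator ?_ hSm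
        exact (Real.continuous_exp.comp (continuous_const.mul continuous_fst).neg).stronglyMeasurable
      exact ((hm.comp_measurable measurable_prodMk_left).aestronglyMeasurable).mul hf_meas
    · rw [hν, ae_restrict_iff' measurableSet_Ioi]
      refine ae_of_all _ (fun u hu => ?_)
      rw [hVdef]
      simp only [norm_mul]
      have h1 : ‖S.indicator (fun p : ℝ × ℝ => Real.exp (-(lam * p.1))) (t, u)‖ ≤ 1 := by
        rw [Set.indicator_apply]
        split_ifs with hmem
        · rw [Real.norm_eq_abs, abs_of_pos (Real.exp_pos _), Real.exp_le_one_iff, neg_nonpos]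
          have hxu : (0:ℝ) < (x / u) ^ α := Real.rpow_pos_of_pos (div_pos hx hu) _
          have ht : (0:ℝ) < t := lt_trans hxu hmem
          exact mul_nonneg hlam.le ht.le
        · simp
      calc ‖S.indicator (fun p : ℝ × ℝ => Real.exp (-(lam * p.1))) (t, u)‖ * ‖f u‖
          ≤ 1 * ‖f u‖ := mul_le_mul_of_nonneg_right h1 (norm_nonneg _)
        _ = ‖f u‖ := one_mul _
  -- integrability of the norm of slices
  have hnorm_int : Integrable (fun t => ∫ u, ‖V t u‖ ∂ν) ν := by
    refine Integrable.mono' ((exp_neg_integrableOn_Ioi 0 hlam).congr_fun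
      (fun t _ => by beta_reduce; rw [neg_mul]) measurableSet_Ioi) ?_ ?_
    · have := (hVm.norm).integral_prod_right'
      simpa [Function.uncurry] using this
    · rw [hν, ae_restrict_iff' measurableSet_Ioi]
      refine ae_of_all _ (fun t ht => ?_)
      have h1 : (0:ℝ) ≤ ∫ u, ‖V t u‖ ∂ν := integral_nonneg (fun u => norm_nonneg _)
      rw [Real.norm_eq_abs, abs_of_nonneg h1]
      have h2 : ∀ᵐ u ∂ν, ‖V t u‖ ≤ Real.exp (-(lam * t)) * f u := by
        rw [hν, ae_restrict_iff' measurableSet_Ioi]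
        refine ae_of_all _ (fun u hu => ?_)
        rw [hVdef]
        simp only [norm_mul]
        rw [Set.indicator_apply]
        split_ifs with hmem
        · rw [Real.norm_eq_abs, abs_of_pos (Real.exp_pos _),
            Real.norm_eq_abs, abs_of_nonneg (hf_nonneg u hu)]
        · simp only [norm_zero, zero_mul]
          exact mul_nonneg (Real.exp_pos _).le (hf_nonneg u hu)
      calc (∫ u, ‖V t u‖ ∂ν) ≤ ∫ u, Real.exp (-(lam * t)) * f u ∂ν :=
            integral_mono_ae (hslice t).norm (hf_int.const_mul _) h2
        _ = Real.exp (-(lam * t)) := by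
            rw [MeasureTheory.integral_const_mul]
            rw [hν] at *
            rw [hf_prob, mul_one]
  have hVint : Integrable (Function.uncurry V) (ν.prod ν) := by
    rw [integrable_prod_iff hVm]
    exact ⟨ae_of_all _ (fun t => hslice t), hnorm_int⟩
  have hswap : ∫ t, ∫ u, V t u ∂ν ∂ν = ∫ u, ∫ t, V t u ∂ν ∂ν :=
    integral_integral_swap hVint
  -- identify LHS slices
  have hLHSslice : ∀ t ∈ Set.Ioi (0:ℝ),
      (∫ u, V t u ∂ν) = (1 - F (x * t ^ (-(1/α)))) * Real.exp (-(lam * t)) := by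
    intro t ht
    have ht' : (0:ℝ) < t := ht
    set y : ℝ := x * t ^ (-(1/α)) with hy
    have hy0 : 0 < y := by
      rw [hy]; positivity
    have h1 : ∀ u ∈ Set.Ioi (0:ℝ), V t u =
        Real.exp (-(lam * t)) * (Set.Ioi y).indicator f u := by
      intro u hu
      have hu' : (0:ℝ) < u := hu
      rw [hVdef]
      simp only
      rw [Set.indicator_apply, Set.indicator_apply]
      simp only [show ((t,u) ∈ S) ↔ (u ∈ Set.Ioi y) from
        show (t,u) ∈ S ↔ u ∈ Set.Ioi y from hcond t u ht' hu']
      split_ifs with h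
      · rfl
      · rw [zero_mul, mul_zero]
    rw [hν, setIntegral_congr_fun measurableSet_Ioi h1, MeasureTheory.integral_const_mul,
      MeasureTheory.integral_indicator measurableSet_Ioi, Measure.restrict_restrict measurableSet_Ioi,
      Set.Ioi_inter_Ioi, sup_of_le_left hy0.le, ← htail y hy0]
    ring
  -- identify RHS slices
  have hRHSslice : ∀ u ∈ Set.Ioi (0:ℝ),
      (∫ t, V t u ∂ν) = f u * (lam⁻¹ * Real.exp (-(lam * (x/u) ^ α))) := by
    intro u hu
    have hu' : (0:ℝ) < u := hu
    set b : ℝ := (x/u) ^ α with hb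
    have hb0 : 0 < b := Real.rpow_pos_of_pos (by positivity) _
    have h1 : ∀ t : ℝ, V t u = (Set.Ioi b).indicator (fun t => Real.exp (-(lam * t))) t * f u := by
      intro t
      rw [hVdef]
      simp only
      rw [Set.indicator_apply, Set.indicator_apply]
      simp only [show ((t,u) ∈ S) ↔ (t ∈ Set.Ioi b) from Iff.rfl]
    rw [integral_congr_ae (ae_of_all _ h1), MeasureTheory.integral_mul_const, hν,
      MeasureTheory.integral_indicator measurableSet_Ioi, Measure.restrict_restrict measurableSet_Ioi,
      Set.Ioi_inter_Ioi, sup_of_le_left hb0.le]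
    have h2 : ∫ t in Set.Ioi b, Real.exp (-(lam * t)) = lam⁻¹ * Real.exp (-(lam * b)) := by
      have h3 := integral_comp_mul_left_Ioi (fun z => Real.exp (-z)) b hlam
      simp only [smul_eq_mul] at h3
      rw [h3, integral_exp_neg_Ioi]
    rw [h2]
    ring
  -- put everything together
  have hmain : ∫ t in Set.Ioi (0:ℝ), (1 - F (x * t ^ (-(1/α)))) * Real.exp (-(lam * t))
      = ∫ u in Set.Ioi (0:ℝ), f u * (lam⁻¹ * Real.exp (-(lam * (x/u) ^ α))) := by
    rw [← setIntegral_congr_fun measurableSet_Ioi hLHSslice]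
    rw [hν] at hswap ⊢
    rw [hswap]
    exact setIntegral_congr_fun measurableSet_Ioi hRHSslice
  rw [hmain]
  set c : ℝ := lam * x ^ α with hc
  have hc0 : 0 < c := by rw [hc]; positivity
  have h4 : ∀ u ∈ Set.Ioi (0:ℝ), f u * (lam⁻¹ * Real.exp (-(lam * (x/u) ^ α)))
      = lam⁻¹ * (f u * Real.exp (-(c * u ^ (-α)))) := by
    intro u hu
    have hu' : (0:ℝ) < u := hu
    have h5 : lam * (x/u) ^ α = c * u ^ (-α) := by
      rw [Real.div_rpow hx.le hu'.le, Real.rpow_neg hu'.le, hc, div_eq_mul_inv]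
      ring
    rw [h5]
    ring
  rw [setIntegral_congr_fun measurableSet_Ioi h4, MeasureTheory.integral_const_mul,
    key_integral hα hα1 hf_nonneg hf_int hf_prob hf_lt hc0]
  rw [mittagLeffler]
  rw [← mul_assoc, mul_inv_cancel₀ hlam.ne', one_mul]
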